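/- For any n×n real matrix A and symmetric positive definite C, if z is a least squares solution of A C Aᵀ z = b, then x = C Aᵀ z is a least squares solution of A x = b. -/

import Mathlib

open Matrix

noncomputable def e2norm {n : ℕ} (v : Fin n → ℝ) : ℝ := ‖(WithLp.equiv 2 (Fin n → ℝ)).symm v‖

theorem ACAT_lsq_gives_lsq {n : ℕ} (A C : Matrix (Fin n) (Fin n) ℝ) (hC : C.PosDef)
    (b z : Fin n → ℝ)
    (hz : ∀ w : Fin n → ℝ,
      e2norm (b - (A * C * Aᵀ).mulVec z) ≤ e2norm (b - (A * C * Aᵀ).mulVec w)) :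
    ∀ x : Fin n → ℝ, e2norm (b - A.mulVec ((C * Aᵀ).mulVec z)) ≤ e2norm (b - A.mulVec x) := by
  intro x
  set S := (open scoped MatrixOrder in CFC.sqrt C) with hS
  have hSsymm : Sᵀ = S := by
    have := (Matrix.conjTranspose_eq_transpose_of_trivial S).symm.trans
      (open scoped MatrixOrder in (CFC.sqrt_nonneg C).posSemidef).isHermitian
    simpa [Matrix.IsHermitian, Matrix.conjTranspose] using this
  have hSS : S * S = C := open scoped MatrixOrder in CFC.sqrt_mul_sqrt_self C hC.posSemidef.nonneg
  have hfact : A * C * Aᵀ = (A * S) * (A * S)ᵀ := by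
    rw [Matrix.transpose_mul, hSsymm, ← hSS]
    noncomm_ring
  have hdetS : IsUnit S.det := by
    have hdetC : IsUnit C.det := hC.det_pos.ne'.isUnit
    have : S.det * S.det = C.det := by rw [← Matrix.det_mul, hSS]
    exact isUnit_of_mul_isUnit_left (this ▸ hdetC)
  have hrank : (A * C * Aᵀ).rank = A.rank := by
    rw [hfact, Matrix.rank_self_mul_transpose, Matrix.rank_mul_eq_left_of_isUnit_det S A hdetS]
  have hle : LinearMap.range (A * C * Aᵀ).mulVecLin ≤ LinearMap.range A.mulVecLin := by
    rintro y ⟨v, rfl⟩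
    exact ⟨(C * Aᵀ).mulVec v, by
      rw [Matrix.mulVecLin_apply, Matrix.mulVecLin_apply, Matrix.mulVec_mulVec, Matrix.mul_assoc]⟩
  have hrange : LinearMap.range (A * C * Aᵀ).mulVecLin = LinearMap.range A.mulVecLin :=
    Submodule.eq_of_le_of_finrank_eq hle hrank
  have hx : A.mulVec x ∈ LinearMap.range (A * C * Aᵀ).mulVecLin := by
    rw [hrange]; exact ⟨x, rfl⟩
  obtain ⟨w, hw⟩ := hx
  have hzx : A.mulVec ((C * Aᵀ).mulVec z) = (A * C * Aᵀ).mulVec z := by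
    simp [Matrix.mulVec_mulVec, Matrix.mul_assoc]
  rw [hzx]
  calc e2norm (b - (A * C * Aᵀ).mulVec z) ≤ e2norm (b - (A * C * Aᵀ).mulVec w) := hz w
    _ = e2norm (b - A.mulVec x) := by rw [show (A * C * Aᵀ).mulVec w = A.mulVec x from hw]
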